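/- Let H = (f, φ; g, ψ) with entries in L²(𝕋) and suppose R_H is bounded on L²(𝕋). Let V be the conjugation on L²(𝕋) defined by (Vx)(z) = z̄·conj(x(z)). Then R_H is complex symmetric with respect to V, i.e. V R_H V = R_H*, if and only if f = ψ. -/

import Mathlib

open MeasureTheory AddCircle Filter Topology
open scoped ENNReal

noncomputable section

namespace GSIO

instance : Fact (0 < 2 * Real.pi) := ⟨by positivity⟩

/-- The unit circle, realized as `ℝ / 2πℤ`. -/
abbrev 𝕋 : Type := AddCircle (2 * Real.pi)

/-- Normalized Lebesgue (Haar) measure on the circle. -/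
abbrev μ : Measure 𝕋 := @haarAddCircle (2 * Real.pi) _

/-- `L²(𝕋)`. -/
abbrev L2 : Type := Lp ℂ 2 μ

/-- The embedding `𝕋 ⊆ ℂ`, `t ↦ e^{it}`. -/
def e : C(𝕋, ℂ) := ⟨fun t => (toCircle t : ℂ), continuous_induced_dom.comp continuous_toCircle⟩

/-- The Hardy space `H²`: the closed linear span of `{zⁿ : n ≥ 0}` in `L²`. -/
def H2 : Submodule ℂ L2 :=
  (Submodule.span ℂ (Set.range fun n : ℕ => (fourierLp 2 (n : ℤ) : L2))).topologicalClosure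

instance : CompleteSpace H2 :=
  (Submodule.isClosed_topologicalClosure _).completeSpace_coe

/-- The Riesz projection `P₊ : L² → H² ⊆ L²`. -/
def Pplus : L2 →L[ℂ] L2 := (H2.subtypeL).comp H2.orthogonalProjectionOnto

/-- `P₋ = I - P₊`. -/
def Pminus : L2 →L[ℂ] L2 := ContinuousLinearMap.id ℂ L2 - Pplus

/-- The GSIO defining relation `R x = P₊(f·P₊x) + P₋(g·P₊x) + P₊(φ·P₋x) + P₋(ψ·P₋x)`
at a point `x ∈ L²` (including the requirement that the four products lie in `L²`). -/
def gsioEq (R : L2 → L2) (f g φ ψ : 𝕋 → ℂ) (x : L2) : Prop :=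
  ∃ (h₁ : MemLp (f * ⇑(Pplus x)) 2 μ) (h₂ : MemLp (g * ⇑(Pplus x)) 2 μ)
    (h₃ : MemLp (φ * ⇑(Pminus x)) 2 μ) (h₄ : MemLp (ψ * ⇑(Pminus x)) 2 μ),
    R x = Pplus (h₁.toLp _) + Pminus (h₂.toLp _) + Pplus (h₃.toLp _) + Pminus (h₄.toLp _)

/-- `R` is the (bounded) generalized singular integral operator with
symbol matrix `(f, φ; g, ψ)`. -/
def IsGSIO (R : L2 →L[ℂ] L2) (f g φ ψ : 𝕋 → ℂ) : Prop := ∀ x : L2, gsioEq (⇑R) f g φ ψ x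

/-- Normalized reproducing kernel `k_z` of `H²`, as an element of `L²`. -/
def kern (z : ℂ) : L2 :=
  (Real.sqrt (1 - ‖z‖ ^ 2) : ℂ) • ∑' n : ℕ, (starRingEnd ℂ z) ^ n • (fourierLp 2 (n : ℤ) : L2)

/-- The unit vector `z̄k̄_z : w ↦ w̄ ⬝ conj (k_z w)` of `(H²)^⊥`, as an element of `L²`. -/
def kbar (z : ℂ) : L2 :=
  (Real.sqrt (1 - ‖z‖ ^ 2) : ℂ) • ∑' n : ℕ, z ^ n • (fourierLp 2 (-(n + 1) : ℤ) : L2)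

/-- `L∞(𝕋)`: essentially bounded (a.e. strongly measurable) functions. -/
def Linf : Set (𝕋 → ℂ) := {h | MemLp h ∞ μ}

/-- `C(𝕋)`: functions (a.e. equal to) continuous functions. -/
def CT : Set (𝕋 → ℂ) := {h | ∃ c : 𝕋 → ℂ, Continuous c ∧ h =ᵐ[μ] c}

/-- `H∞ = H² ∩ L∞`. -/
def Hinf : Set (𝕋 → ℂ) := {h | ∃ h2 : MemLp h 2 μ, h2.toLp h ∈ H2 ∧ MemLp h ∞ μ}

/-- `H∞ + C(𝕋)`. -/
def HinfC : Set (𝕋 → ℂ) := {h | ∃ a ∈ Hinf, ∃ c ∈ CT, h =ᵐ[μ] a + c}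

/-- The quasicontinuous functions `QC = (H∞ + C) ∩ conj (H∞ + C)`. -/
def QC : Set (𝕋 → ℂ) := {h | h ∈ HinfC ∧ star h ∈ HinfC}

/-- The set of GSIOs with all four symbols in `S`. -/
def gsioSet (S : Set (𝕋 → ℂ)) : Set (L2 →L[ℂ] L2) :=
  {R | ∃ f g φ ψ : 𝕋 → ℂ, f ∈ S ∧ g ∈ S ∧ φ ∈ S ∧ ψ ∈ S ∧ IsGSIO R f g φ ψ}

/-- The C*-algebra `𝔑_S` generated by the GSIOs with symbols in `S`. -/
def NAlg (S : Set (𝕋 → ℂ)) : StarSubalgebra ℂ (L2 →L[ℂ] L2) :=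
  (StarAlgebra.adjoin ℂ (gsioSet S)).topologicalClosure

/-- Generators `R_{H₁} R_{H₂} - R_K` of the semicommutator ideal. -/
def semiGen (S : Set (𝕋 → ℂ)) : Set (L2 →L[ℂ] L2) :=
  {T | ∃ f₁ g₁ φ₁ ψ₁ f₂ g₂ φ₂ ψ₂ g φ : 𝕋 → ℂ,
      f₁ ∈ S ∧ g₁ ∈ S ∧ φ₁ ∈ S ∧ ψ₁ ∈ S ∧ f₂ ∈ S ∧ g₂ ∈ S ∧ φ₂ ∈ S ∧ ψ₂ ∈ S ∧
      g ∈ S ∧ φ ∈ S ∧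
      ∃ R₁ R₂ RK : L2 →L[ℂ] L2, IsGSIO R₁ f₁ g₁ φ₁ ψ₁ ∧ IsGSIO R₂ f₂ g₂ φ₂ ψ₂ ∧
        IsGSIO RK (f₁ * f₂) g φ (ψ₁ * ψ₂) ∧ T = R₁ * R₂ - RK}

/-- The closed two-sided ideal `𝔖𝔑_S` of `𝔑_S` generated by the semicommutators. -/
def SemiIdeal (S : Set (𝕋 → ℂ)) : Set (L2 →L[ℂ] L2) :=
  closure (AddSubgroup.closure
    {T | ∃ a b t : L2 →L[ℂ] L2, a ∈ NAlg S ∧ b ∈ NAlg S ∧ t ∈ semiGen S ∧ T = a * t * b} :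
      Set (L2 →L[ℂ] L2))

/-- Fredholm: closed range and finite-dimensional kernel and cokernel. -/
def IsFredholm (T : L2 →L[ℂ] L2) : Prop :=
  FiniteDimensional ℂ (LinearMap.ker (T : L2 →ₗ[ℂ] L2)) ∧
  FiniteDimensional ℂ (L2 ⧸ LinearMap.range (T : L2 →ₗ[ℂ] L2)) ∧
  IsClosed (LinearMap.range (T : L2 →ₗ[ℂ] L2) : Set L2)

/-- Fredholm index `ind T = dim ker T - dim ker T*`. -/
def ind (T : L2 →L[ℂ] L2) : ℤ :=
  (Module.finrank ℂ (LinearMap.ker (T : L2 →ₗ[ℂ] L2)) : ℤ) -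
    (Module.finrank ℂ (LinearMap.ker (ContinuousLinearMap.adjoint T : L2 →ₗ[ℂ] L2)) : ℤ)

/-- Essential spectrum (spectrum in the Calkin algebra, via Atkinson's theorem). -/
def essSpectrum (T : L2 →L[ℂ] L2) : Set ℂ := {z | ¬ IsFredholm (T - z • 1)}

/-- Essential norm: distance to the compact operators. -/
def essNorm (T : L2 →L[ℂ] L2) : ℝ :=
  sInf ((fun K => ‖T + K‖) '' {K : L2 →L[ℂ] L2 | IsCompactOperator K})

/-- Essential range of a measurable function. -/
def essRange (f : 𝕋 → ℂ) : Set ℂ := {c | ∀ ε > 0, μ {t | dist (f t) c < ε} ≠ 0}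

/-- `a` has winding number `w` about the origin, via a continuous argument lift. -/
def HasWindingNumber (a : C(𝕋, ℂ)) (w : ℤ) : Prop :=
  ∃ θ : ℝ → ℝ, ContinuousOn θ (Set.Icc 0 (2 * Real.pi)) ∧
    (∀ t ∈ Set.Icc 0 (2 * Real.pi),
      a (t : 𝕋) = (‖a (t : 𝕋)‖ : ℂ) * Complex.exp (θ t * Complex.I)) ∧
    θ (2 * Real.pi) - θ 0 = 2 * Real.pi * w

/-- The constant function `1` in `L²`. -/
def one2 : L2 := MemLp.toLp (fun _ => (1 : ℂ)) (memLp_const 1)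

/-- The rank-one operator `1 ⊗ 1 : x ↦ ⟨x,1⟩·1`. -/
def oneProj : L2 →L[ℂ] L2 := (innerSL ℂ one2).smulRight one2

/-- The Hilbert transform `ℍ = P₊ - P₋ - 1⊗1`. -/
def hilbertT : L2 →L[ℂ] L2 := Pplus - Pminus - oneProj

/-- `BMO(𝕋) = L∞ + ℍ L∞`, as a subset of `L²`. -/
def BMO2 : Set L2 := {x | ∃ a b : L2, ⇑a ∈ Linf ∧ ⇑b ∈ Linf ∧ x = a + hilbertT b}

/-- `⋂_{p ≥ 1} L^p(𝕋)`. -/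
def Lfin : Set (𝕋 → ℂ) := {h | ∀ p : ℝ, 1 ≤ p → MemLp h (ENNReal.ofReal p) μ}

/-- The GSIO relation for a map defined on functions (rather than on `L²`). -/
def gsioEqF (R : (𝕋 → ℂ) → (𝕋 → ℂ)) (f g φ ψ : 𝕋 → ℂ) (x : 𝕋 → ℂ) : Prop :=
  ∃ (hx : MemLp x 2 μ)
    (h₁ : MemLp (f * ⇑(Pplus (hx.toLp x))) 2 μ) (h₂ : MemLp (g * ⇑(Pplus (hx.toLp x))) 2 μ)
    (h₃ : MemLp (φ * ⇑(Pminus (hx.toLp x))) 2 μ) (h₄ : MemLp (ψ * ⇑(Pminus (hx.toLp x))) 2 μ),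
    R x =ᵐ[μ] ⇑(Pplus (h₁.toLp _) + Pminus (h₂.toLp _) + Pplus (h₃.toLp _) + Pminus (h₄.toLp _))

/-- Distance in `L∞` from a function to `H∞`. -/
def distHinfF (a : 𝕋 → ℂ) : ℝ :=
  sInf {r : ℝ | ∃ h ∈ Hinf, r = (eLpNorm (a - h) ∞ μ).toReal}

end GSIO

namespace GSIO

/-- The radial-limit function of `T` along the reproducing kernels `k_{rξ}` is `f`:
`lim_{r→1⁻} ⟨T k_{rξ}, k_{rξ}⟩ = f ξ` for a.e. `ξ` (inner products in the Mathlib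
convention, conjugate-linear in the first variable). -/
def symbPlus (T : L2 → L2) (f : 𝕋 → ℂ) : Prop :=
  ∀ᵐ ξ ∂μ, Tendsto
    (fun r : ℝ => (inner ℂ (kern ((r : ℂ) * e ξ)) (T (kern ((r : ℂ) * e ξ))) : ℂ))
    (𝓝[<] (1 : ℝ)) (𝓝 (f ξ))

/-- The radial-limit function of `T` along the vectors `z̄k̄_{rξ}` is `ψ`:
`lim_{r→1⁻} ⟨T z̄k̄_{rξ}, z̄k̄_{rξ}⟩ = ψ ξ` for a.e. `ξ`. -/
def symbMinus (T : L2 → L2) (ψ : 𝕋 → ℂ) : Prop :=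
  ∀ᵐ ξ ∂μ, Tendsto
    (fun r : ℝ => (inner ℂ (kbar ((r : ℂ) * e ξ)) (T (kbar ((r : ℂ) * e ξ))) : ℂ))
    (𝓝[<] (1 : ℝ)) (𝓝 (ψ ξ))

/-- `ρ(T) = (f, ψ)`: the pair of radial-limit symbol functions of `T`, in `L∞ ⊕ L∞`. -/
def HasSymbol (T : L2 →L[ℂ] L2) (f ψ : 𝕋 → ℂ) : Prop :=
  f ∈ Linf ∧ ψ ∈ Linf ∧ symbPlus (⇑T) f ∧ symbMinus (⇑T) ψ

end GSIO

namespace GSIO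

/-- The conjugation `V` at the level of functions: `(V x)(z) = z̄ ⬝ conj (x z)`. -/
def VF (x : 𝕋 → ℂ) : 𝕋 → ℂ := star (⇑e * x)


open scoped InnerProductSpace ComplexConjugate

lemma e_eq_fourier (t : 𝕋) : e t = fourier 1 t := by
  rw [fourier_apply, one_zsmul]; rfl

lemma e_norm (t : 𝕋) : ‖e t‖ = 1 := by
  show ‖((toCircle t : Circle) : ℂ)‖ = 1
  rw [Circle.norm_coe]

lemma e_mul_conj (t : 𝕋) : e t * conj (e t) = 1 := by
  rw [Complex.mul_conj, Complex.normSq_eq_norm_sq, e_norm]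
  norm_num

lemma VF_apply (u : 𝕋 → ℂ) (t : 𝕋) : VF u t = star (e t * u t) := rfl

lemma VF_norm (u : 𝕋 → ℂ) (t : 𝕋) : ‖VF u t‖ = ‖u t‖ := by
  rw [VF_apply, norm_star, norm_mul, e_norm, one_mul]

lemma VF_aesm {u : 𝕋 → ℂ} (hu : AEStronglyMeasurable u μ) :
    AEStronglyMeasurable (VF u) μ :=
  continuous_star.comp_aestronglyMeasurable (e.continuous.aestronglyMeasurable.mul hu)

lemma memVF {u : 𝕋 → ℂ} (hu : MemLp u 2 μ) : MemLp (VF u) 2 μ :=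
  ⟨VF_aesm hu.1, by
    rw [eLpNorm_congr_norm_ae (Eventually.of_forall fun t => VF_norm u t)]
    exact hu.2⟩

lemma VF_congr {u v : 𝕋 → ℂ} (h : u =ᵐ[μ] v) : VF u =ᵐ[μ] VF v := by
  filter_upwards [h] with t ht
  rw [VF_apply, VF_apply, ht]

/-- The conjugation `V` as a map on `L²`. -/
def U (x : L2) : L2 := (memVF (Lp.memLp x)).toLp (VF ⇑x)

lemma coeU (x : L2) : ⇑(U x) =ᵐ[μ] VF ⇑x := MemLp.coeFn_toLp _

lemma U_add (a b : L2) : U (a + b) = U a + U b := by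
  rw [U, U, U, ← MemLp.toLp_add]
  apply MemLp.toLp_congr
  filter_upwards [Lp.coeFn_add a b] with t ht
  rw [VF_apply, ht, Pi.add_apply, Pi.add_apply, VF_apply, VF_apply]
  simp [mul_add]

lemma U_zero : U (0 : L2) = 0 := by
  have hae : VF ⇑(0 : L2) =ᵐ[μ] (0 : 𝕋 → ℂ) := by
    filter_upwards [Lp.coeFn_zero ℂ 2 μ] with t ht
    rw [VF_apply, ht]; simp
  rw [U, MemLp.toLp_congr (memVF (Lp.memLp (0:L2))) MemLp.zero hae, MemLp.toLp_zero]

lemma innerU (a b : L2) : ⟪a, U b⟫_ℂ = ⟪b, U a⟫_ℂ := by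
  rw [L2.inner_def, L2.inner_def]
  have h1 : ∀ c d : L2, ∫ t, ⟪c t, (U d) t⟫_ℂ ∂μ = conj (∫ t, c t * e t * d t ∂μ) := by
    intro c d
    rw [← integral_conj]
    apply integral_congr_ae
    filter_upwards [coeU d] with t ht
    rw [ht, VF_apply, RCLike.inner_apply]
    simp only [RCLike.star_def, map_mul]
    ring
  rw [h1, h1]
  congr 1
  apply integral_congr_ae
  exact Eventually.of_forall fun t => by ring

lemma U_fourier (k : ℤ) : U (fourierLp 2 k : L2) = (fourierLp 2 (-(k+1)) : L2) := by
  have hae : VF ⇑(fourierLp 2 k : L2) =ᵐ[μ] ⇑(fourierLp 2 (-(k+1)) : L2) := by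
    filter_upwards [coeFn_fourierLp 2 k, coeFn_fourierLp 2 (-(k+1))] with t h1 h2
    rw [VF_apply, h1, h2, e_eq_fourier, ← fourier_add, show (-(k+1) : ℤ) = -(1+k) by ring,
      fourier_neg, RCLike.star_def]
  rw [U, MemLp.toLp_congr (memVF (Lp.memLp _)) (Lp.memLp _) hae]
  exact MeasureTheory.Lp.toLp_coeFn _ _

/-- The span of the nonnegative Fourier modes (so that `H2` is its closure). -/
abbrev posSpan : Submodule ℂ L2 :=
  Submodule.span ℂ (Set.range fun n : ℕ => (fourierLp 2 (n : ℤ) : L2))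

/-- The closed span of the negative Fourier modes. -/
def H2m : Submodule ℂ L2 :=
  (Submodule.span ℂ (Set.range fun n : ℕ =>
    (fourierLp 2 (-(n+1) : ℤ) : L2))).topologicalClosure

instance : CompleteSpace H2m :=
  (Submodule.isClosed_topologicalClosure _).completeSpace_coe

lemma ortho_closure (K : Submodule ℂ L2) : K.topologicalClosureᗮ = Kᗮ := by
  rw [← Submodule.orthogonal_orthogonal_eq_closure]
  exact Submodule.triorthogonal_eq_orthogonal (K := K)

lemma mem_ortho_span_iff (S : Set L2) (v : L2) :
    v ∈ ((Submodule.span ℂ S).topologicalClosure)ᗮ ↔ ∀ s ∈ S, ⟪s, v⟫_ℂ = 0 := by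
  rw [ortho_closure]
  constructor
  · exact fun h s hs => (Submodule.mem_orthogonal _ v).1 h s (Submodule.subset_span hs)
  · intro h
    rw [Submodule.mem_orthogonal']
    intro u hu
    induction hu using Submodule.span_induction with
    | mem s hs => rw [← inner_conj_symm, h s hs, map_zero]
    | zero => rw [inner_zero_right]
    | add a b _ _ ha hb => rw [inner_add_right, ha, hb, add_zero]
    | smul c a _ ha => rw [inner_smul_right, ha, mul_zero]

lemma fourier_inner_zero {j k : ℤ} (h : j ≠ k) :
    ⟪(fourierLp 2 j : L2), (fourierLp 2 k : L2)⟫_ℂ = 0 := by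
  have := (@fourierBasis (2 * Real.pi) _).orthonormal.2 (i := j) (j := k) h
  rwa [coe_fourierBasis] at this

lemma fourier_mem_H2 (n : ℕ) : (fourierLp 2 (n : ℤ) : L2) ∈ H2 :=
  Submodule.le_topologicalClosure _ (Submodule.subset_span ⟨n, rfl⟩)

lemma negF_mem_ortho (n : ℕ) : (fourierLp 2 (-(n+1) : ℤ) : L2) ∈ H2ᗮ := by
  rw [show H2ᗮ = ((Submodule.span ℂ (Set.range fun n : ℕ =>
      (fourierLp 2 (n : ℤ) : L2))).topologicalClosure)ᗮ from rfl, mem_ortho_span_iff]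
  rintro s ⟨m, rfl⟩
  exact fourier_inner_zero (by omega)

lemma H2m_le_ortho : H2m ≤ H2ᗮ := by
  apply Submodule.topologicalClosure_minimal
  · rw [Submodule.span_le]
    rintro s ⟨n, rfl⟩
    exact negF_mem_ortho n
  · exact Submodule.isClosed_orthogonal _

lemma eq_zero_of_inner_fourier {w : L2} (hw : ∀ k : ℤ, ⟪(fourierLp 2 k : L2), w⟫_ℂ = 0) :
    w = 0 := by
  have h0 : (@fourierBasis (2 * Real.pi) _).repr w = 0 := by
    apply lp.ext
    funext k
    rw [HilbertBasis.repr_apply_apply]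
    have : (@fourierBasis (2 * Real.pi) _) k = (fourierLp 2 k : L2) := by
      rw [coe_fourierBasis]
    rw [this, hw k]
    rfl
  exact (@fourierBasis (2 * Real.pi) _).repr.map_eq_zero_iff.1 h0

lemma H2_ortho_eq : H2ᗮ = H2m := by
  refine le_antisymm ?_ H2m_le_ortho
  intro v hv
  have hsub : v - ↑(H2m.orthogonalProjectionOnto v) ∈ H2mᗮ :=
    Submodule.sub_starProjection_mem_orthogonal (K := H2m) v
  have hw : v - ↑(H2m.orthogonalProjectionOnto v) = 0 := by
    apply eq_zero_of_inner_fourier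
    intro k
    rcases le_or_gt 0 k with hk | hk
    · have hv' : v - ↑(H2m.orthogonalProjectionOnto v) ∈ H2ᗮ :=
        Submodule.sub_mem _ hv (H2m_le_ortho (SetLike.coe_mem _))
      obtain ⟨n, rfl⟩ : ∃ n : ℕ, k = (n : ℤ) := ⟨k.toNat, (Int.toNat_of_nonneg hk).symm⟩
      exact (Submodule.mem_orthogonal _ _).1 hv' _ (fourier_mem_H2 n)
    · obtain ⟨n, rfl⟩ : ∃ n : ℕ, k = -(n+1 : ℤ) := ⟨(-k-1).toNat, by omega⟩
      refine (Submodule.mem_orthogonal _ _).1 hsub _ ?_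
      exact Submodule.le_topologicalClosure _ (Submodule.subset_span ⟨n, rfl⟩)
  have : v = ↑(H2m.orthogonalProjectionOnto v) := by rwa [sub_eq_zero] at hw
  rw [this]; exact SetLike.coe_mem _

lemma U_mem_ortho {a : L2} (ha : a ∈ H2) : U a ∈ H2ᗮ := by
  rw [show H2ᗮ = ((Submodule.span ℂ (Set.range fun n : ℕ =>
      (fourierLp 2 (n : ℤ) : L2))).topologicalClosure)ᗮ from rfl, mem_ortho_span_iff]
  rintro s ⟨n, rfl⟩
  rw [innerU, U_fourier]
  exact (Submodule.mem_orthogonal _ _).1 (negF_mem_ortho n) a ha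

lemma U_mem_H2 {a : L2} (ha : a ∈ H2ᗮ) : U a ∈ H2 := by
  rw [← H2.orthogonal_orthogonal, H2_ortho_eq, H2m, mem_ortho_span_iff]
  rintro s ⟨n, rfl⟩
  rw [innerU, U_fourier, show (-((-(n+1:ℤ))+1) : ℤ) = (n : ℤ) by ring,
    ← inner_conj_symm]
  rw [(Submodule.mem_orthogonal _ _).1 ha _ (fourier_mem_H2 n), map_zero]

lemma Pplus_coe (x : L2) : Pplus x = ↑(H2.orthogonalProjectionOnto x) := rfl

lemma Pminus_eq (x : L2) : Pminus x = x - Pplus x := rfl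

lemma Pplus_mem (x : L2) : Pplus x ∈ H2 := SetLike.coe_mem _

lemma Pminus_mem (x : L2) : Pminus x ∈ H2ᗮ := by
  rw [Pminus_eq, Pplus_coe]
  exact Submodule.sub_starProjection_mem_orthogonal x

lemma Pplus_of_mem {x : L2} (hx : x ∈ H2) : Pplus x = x := by
  rw [Pplus_coe]; exact Submodule.starProjection_eq_self_iff.2 hx

lemma Pplus_of_ortho {x : L2} (hx : x ∈ H2ᗮ) : Pplus x = 0 := by
  rw [Pplus_coe, Submodule.orthogonalProjectionOnto_apply_of_mem_orthogonal hx,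
    Submodule.coe_zero]

lemma U_decomp (x : L2) : U x = U (Pplus x) + U (Pminus x) := by
  rw [← U_add]
  congr 1
  rw [Pminus_eq]
  abel

lemma Pplus_U (x : L2) : Pplus (U x) = U (Pminus x) := by
  rw [U_decomp x, map_add, Pplus_of_ortho (U_mem_ortho (Pplus_mem x)),
    Pplus_of_mem (U_mem_H2 (Pminus_mem x)), zero_add]

lemma Pminus_U (x : L2) : Pminus (U x) = U (Pplus x) := by
  rw [Pminus_eq, Pplus_U, U_decomp x]
  abel

lemma PplusSA (a b : L2) : ⟪Pplus a, b⟫_ℂ = ⟪a, Pplus b⟫_ℂ :=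
  Submodule.inner_starProjection_left_eq_right H2 a b

lemma PminusSA (a b : L2) : ⟪Pminus a, b⟫_ℂ = ⟪a, Pminus b⟫_ℂ := by
  rw [Pminus_eq, Pminus_eq, inner_sub_left, inner_sub_right, PplusSA]

/-- The key integral identity used four times in the backward direction. -/
lemma key {h h' : 𝕋 → ℂ} (hh : h =ᵐ[μ] h') {A B A' B' : L2}
    (hA : ⇑A =ᵐ[μ] VF ⇑B') (hB : ⇑B =ᵐ[μ] VF ⇑A')
    (hm : MemLp (h * ⇑A) 2 μ) (hm' : MemLp (h' * ⇑A') 2 μ) :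
    ⟪hm.toLp (h * ⇑A), B⟫_ℂ = ⟪hm'.toLp (h' * ⇑A'), B'⟫_ℂ := by
  rw [L2.inner_def, L2.inner_def]
  apply integral_congr_ae
  filter_upwards [hm.coeFn_toLp, hm'.coeFn_toLp, hA, hB, hh] with t e1 e2 e3 e4 e5
  rw [e1, e2, RCLike.inner_apply, RCLike.inner_apply, Pi.mul_apply, Pi.mul_apply,
    e3, e4, VF_apply, VF_apply, e5]
  simp only [RCLike.star_def, map_mul, RCLike.conj_conj]
  linear_combination (conj (h' t) * B' t * conj (A' t)) * e_mul_conj t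

lemma memStar {u : 𝕋 → ℂ} (hu : MemLp u 2 μ) : MemLp (star u) 2 μ :=
  ⟨continuous_star.comp_aestronglyMeasurable hu.1, by
    have h : eLpNorm (star u) 2 μ = eLpNorm u 2 μ :=
      eLpNorm_congr_norm_ae (Eventually.of_forall fun t => norm_star (u t))
    rw [h]; exact hu.2⟩

lemma intg {u : 𝕋 → ℂ} (hu : MemLp u 2 μ) (j : ℤ) :
    Integrable (fun t => conj (u t) * fourier j t) μ := by
  have h1 : Integrable (fun t => conj (u t)) μ :=
    MemLp.integrable one_le_two (memStar hu)
  have := Integrable.bdd_mul (f := fun t => (fourier j t : ℂ)) h1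
    (fourier j).continuous.aestronglyMeasurable (Eventually.of_forall fun t => by
      show ‖fourier j t‖ ≤ 1
      rw [fourier_apply, Circle.norm_coe])
  exact this.congr (Eventually.of_forall fun t => by ring)


lemma toLp_ae_zero {u : 𝕋 → ℂ} (hm : MemLp u 2 μ) (h : u =ᵐ[μ] 0) : hm.toLp u = 0 := by
  rw [MemLp.toLp_congr hm MemLp.zero h, MemLp.toLp_zero]

lemma mul_coe_zero_ae (u : 𝕋 → ℂ) : (u * ⇑(0 : L2)) =ᵐ[μ] 0 := by
  filter_upwards [Lp.coeFn_zero ℂ 2 μ] with t ht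
  simp [Pi.mul_apply, ht]

/-- If `R_H` is bounded with symbols in `L²(𝕋)` and `V` is the
conjugation `(Vx)(z) = z̄·conj(x(z))`, then `V R_H V = R_H*` iff `f = ψ`. -/
theorem gsio_complexSymmetric_iff (f g φ ψ : 𝕋 → ℂ)
    (hf : MemLp f 2 μ) (hg : MemLp g 2 μ) (hφ : MemLp φ 2 μ) (hψ : MemLp ψ 2 μ)
    (R : L2 →L[ℂ] L2) (hR : IsGSIO R f g φ ψ) :
    (∀ x : L2, ∃ (h : MemLp (VF ⇑x) 2 μ)
        (h2 : MemLp (VF ⇑(R (h.toLp (VF ⇑x)))) 2 μ),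
        h2.toLp (VF ⇑(R (h.toLp (VF ⇑x)))) = ContinuousLinearMap.adjoint R x) ↔
      f =ᵐ[μ] ψ := by
  have hmain : (∀ x : L2, ∃ (h : MemLp (VF ⇑x) 2 μ)
        (h2 : MemLp (VF ⇑(R (h.toLp (VF ⇑x)))) 2 μ),
        h2.toLp (VF ⇑(R (h.toLp (VF ⇑x)))) = ContinuousLinearMap.adjoint R x) ↔
      (∀ x : L2, U (R (U x)) = ContinuousLinearMap.adjoint R x) := by
    constructor
    · intro H x
      obtain ⟨h, h2, heq⟩ := H x
      exact heq
    · intro H x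
      exact ⟨memVF (Lp.memLp x), memVF (Lp.memLp _), H x⟩
  have hPiff : (∀ x : L2, U (R (U x)) = ContinuousLinearMap.adjoint R x) ↔
      (∀ x y : L2, ⟪R (U x), U y⟫_ℂ = ⟪R y, x⟫_ℂ) := by
    constructor
    · intro H x y
      have h1 := congrArg (fun w => (inner ℂ y w : ℂ)) (H x)
      rw [innerU y (R (U x)), ContinuousLinearMap.adjoint_inner_right] at h1
      exact h1
    · intro H x
      refine ext_inner_left ℂ fun v => ?_
      rw [innerU v (R (U x)), H x v, ← ContinuousLinearMap.adjoint_inner_right]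
  rw [hmain, hPiff]
  constructor
  · -- forward direction
    intro H
    have coeff : ∀ n m : ℕ,
        (∫ t, conj (ψ t) * fourier ((n:ℤ) - m) t ∂μ)
          = ∫ t, conj (f t) * fourier ((n:ℤ) - m) t ∂μ := by
      intro n m
      have hx := H (fourierLp 2 (n:ℤ)) (fourierLp 2 (m:ℤ))
      obtain ⟨h1, h2, h3, h4, hEq⟩ := hR (U (fourierLp 2 (n:ℤ)))
      obtain ⟨k1, k2, k3, k4, hEq'⟩ := hR (fourierLp 2 (m:ℤ))
      rw [hEq, hEq'] at hx
      simp only [inner_add_left] at hx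
      rw [PplusSA, PminusSA, PplusSA, PminusSA, PplusSA, PminusSA, PplusSA, PminusSA] at hx
      have hPpn : Pplus (fourierLp 2 (n:ℤ) : L2) = fourierLp 2 (n:ℤ) :=
        Pplus_of_mem (fourier_mem_H2 n)
      have hPmn : Pminus (fourierLp 2 (n:ℤ) : L2) = 0 := by rw [Pminus_eq, hPpn, sub_self]
      have hPpm : Pplus (fourierLp 2 (m:ℤ) : L2) = fourierLp 2 (m:ℤ) :=
        Pplus_of_mem (fourier_mem_H2 m)
      have hPmm : Pminus (fourierLp 2 (m:ℤ) : L2) = 0 := by rw [Pminus_eq, hPpm, sub_self]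
      have hUPpn : Pplus (U (fourierLp 2 (n:ℤ))) = 0 := by rw [Pplus_U, hPmn, U_zero]
      have hUPmn : Pminus (U (fourierLp 2 (n:ℤ))) = fourierLp 2 (-((n:ℤ)+1)) := by
        rw [Pminus_U, hPpn, U_fourier]
      have hUPpm : Pplus (U (fourierLp 2 (m:ℤ))) = 0 := by rw [Pplus_U, hPmm, U_zero]
      have hUPmm : Pminus (U (fourierLp 2 (m:ℤ))) = fourierLp 2 (-((m:ℤ)+1)) := by
        rw [Pminus_U, hPpm, U_fourier]
      -- kill the trivial terms
      have e2 : h2.toLp (g * ⇑(Pplus (U (fourierLp 2 (n:ℤ))))) = 0 :=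
        toLp_ae_zero h2 (by rw [hUPpn]; exact mul_coe_zero_ae g)
      have e3k : k3.toLp (φ * ⇑(Pminus (fourierLp 2 (m:ℤ) : L2))) = 0 :=
        toLp_ae_zero k3 (by rw [hPmm]; exact mul_coe_zero_ae φ)
      have hψn : MemLp (ψ * ⇑((fourierLp 2 (-((n:ℤ)+1))) : L2)) 2 μ := hUPmn ▸ h4
      have e4 : h4.toLp (ψ * ⇑(Pminus (U (fourierLp 2 (n:ℤ)))))
          = hψn.toLp (ψ * ⇑((fourierLp 2 (-((n:ℤ)+1))) : L2)) :=
        MemLp.toLp_congr h4 hψn (by rw [hUPmn])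
      have hfm : MemLp (f * ⇑((fourierLp 2 (m:ℤ)) : L2)) 2 μ := hPpm ▸ k1
      have e1k : k1.toLp (f * ⇑(Pplus (fourierLp 2 (m:ℤ) : L2)))
          = hfm.toLp (f * ⇑((fourierLp 2 (m:ℤ)) : L2)) :=
        MemLp.toLp_congr k1 hfm (by rw [hPpm])
      rw [hUPpm, hUPmm, hPpn, hPmn, e2, e3k, e4, e1k] at hx
      simp only [inner_zero_left, inner_zero_right, zero_add, add_zero] at hx
      have hL : ⟪hψn.toLp (ψ * ⇑((fourierLp 2 (-((n:ℤ)+1))) : L2)),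
          (fourierLp 2 (-((m:ℤ)+1)) : L2)⟫_ℂ
          = ∫ t, conj (ψ t) * fourier ((n:ℤ) - m) t ∂μ := by
        rw [L2.inner_def]
        apply integral_congr_ae
        filter_upwards [hψn.coeFn_toLp, coeFn_fourierLp 2 (-((n:ℤ)+1)),
          coeFn_fourierLp 2 (-((m:ℤ)+1))] with t e1 e2' e3'
        rw [e1, e3', RCLike.inner_apply', Pi.mul_apply, e2', map_mul, fourier_neg,
          RCLike.conj_conj, mul_assoc, ← fourier_add,
          show ((n:ℤ)+1 + -((m:ℤ)+1)) = (n:ℤ) - m by ring]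
      have hRt : ⟪hfm.toLp (f * ⇑((fourierLp 2 (m:ℤ)) : L2)), (fourierLp 2 (n:ℤ) : L2)⟫_ℂ
          = ∫ t, conj (f t) * fourier ((n:ℤ) - m) t ∂μ := by
        rw [L2.inner_def]
        apply integral_congr_ae
        filter_upwards [hfm.coeFn_toLp, coeFn_fourierLp 2 (m:ℤ),
          coeFn_fourierLp 2 (n:ℤ)] with t e1 e2' e3'
        rw [e1, e3', RCLike.inner_apply', Pi.mul_apply, e2', map_mul, ← fourier_neg,
          mul_assoc, ← fourier_add, show (-(m:ℤ) + n) = (n:ℤ) - m by ring]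
      rw [hL, hRt] at hx
      exact hx
    have vanish : ∀ j : ℤ, ∫ t, conj ((f - ψ) t) * fourier j t ∂μ = 0 := by
      intro j
      have hsub : (∫ t, (conj (f t) - conj (ψ t)) * fourier j t ∂μ)
          = (∫ t, conj (f t) * fourier j t ∂μ) - ∫ t, conj (ψ t) * fourier j t ∂μ := by
        rw [← integral_sub (intg hf j) (intg hψ j)]
        exact integral_congr_ae (Eventually.of_forall fun t => by ring)
      obtain ⟨n, m, rfl⟩ : ∃ n m : ℕ, (n:ℤ) - m = j := by
        rcases le_or_gt 0 j with hj | hj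
        · exact ⟨j.toNat, 0, by push_cast; omega⟩
        · exact ⟨0, (-j).toNat, by push_cast; omega⟩
      rw [show (fun t => conj ((f - ψ) t) * fourier ((n:ℤ) - m) t)
          = fun t => (conj (f t) - conj (ψ t)) * fourier ((n:ℤ) - m) t from
        funext fun t => by simp [Pi.sub_apply], hsub, coeff n m, sub_self]
    have hW : (memStar (hf.sub hψ)).toLp (star (f - ψ)) = 0 := by
      apply eq_zero_of_inner_fourier
      intro k
      rw [L2.inner_def]
      have hcongr : (∫ t, ⟪(⇑(fourierLp 2 k : L2)) t,
            ⇑((memStar (hf.sub hψ)).toLp (star (f - ψ))) t⟫_ℂ ∂μ)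
          = ∫ t, conj ((f - ψ) t) * fourier (-k) t ∂μ := by
        apply integral_congr_ae
        filter_upwards [coeFn_fourierLp 2 k, (memStar (hf.sub hψ)).coeFn_toLp] with t e1 e2
        rw [e1, e2, RCLike.inner_apply', fourier_neg, Pi.star_apply, RCLike.star_def]
        ring
      rw [hcongr, vanish (-k)]
    have hstar : star (f - ψ) =ᵐ[μ] 0 := by
      have h1 := (memStar (hf.sub hψ)).coeFn_toLp
      rw [hW] at h1
      exact h1.symm.trans (Lp.coeFn_zero ℂ 2 μ)
    filter_upwards [hstar] with t ht
    have h2 : star (f t - ψ t) = 0 := ht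
    exact sub_eq_zero.mp (star_eq_zero.mp h2)
  · -- backward direction
    intro hfψ x y
    obtain ⟨h1, h2, h3, h4, hEq⟩ := hR (U x)
    obtain ⟨k1, k2, k3, k4, hEq'⟩ := hR y
    rw [hEq, hEq']
    simp only [inner_add_left]
    rw [PplusSA, PminusSA, PplusSA, PminusSA, PplusSA, PminusSA, PplusSA, PminusSA]
    rw [Pplus_U y, Pminus_U y]
    have hA1 : ⇑(Pplus (U x)) =ᵐ[μ] VF ⇑(Pminus x) := by rw [Pplus_U x]; exact coeU _
    have hA2 : ⇑(Pminus (U x)) =ᵐ[μ] VF ⇑(Pplus x) := by rw [Pminus_U x]; exact coeU _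
    have hk1 := key hfψ hA1 (coeU (Pminus y)) h1 k4
    have hk2 := key (Filter.EventuallyEq.refl _ g) hA1 (coeU (Pplus y)) h2 k2
    have hk3 := key (Filter.EventuallyEq.refl _ φ) hA2 (coeU (Pminus y)) h3 k3
    have hk4 := key hfψ.symm hA2 (coeU (Pplus y)) h4 k1
    rw [hk1, hk2, hk3, hk4]
    ring


end GSIO
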